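/- arXiv:2006.13533 — 2 statements merged into one kernel-verified Lean document; each statement's English description precedes it below -/
import Mathlib

section
/- For the log-sum penalty r_λ(t) = λ·log(1 + t/θ) with λ, θ > 0, the Fréchet subdifferential of w ↦ r_λ(|w|) at w = 0 equals the interval [−λ/θ, λ/θ], and at any w ≠ 0 equals the singleton {λ·sign(w)/(θ + |w|)}. -/
open Filter

/-- The Fréchet subdifferential of `f : ℝ → ℝ` at `x`. -/
def frechetSubdiff (f : ℝ → ℝ) (x : ℝ) : Set ℝ :=
  {v | ∀ ε > (0:ℝ), ∀ᶠ h in nhdsWithin (0:ℝ) {0}ᶜ, f (x + h) - f x - v * h ≥ -ε * |h|}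

/-- The log-sum penalty. -/
noncomputable def logSumPen (lam θ t : ℝ) : ℝ := lam * Real.log (1 + t / θ)

lemma my_log_le (t : ℝ) (ht : 0 ≤ t) : Real.log (1 + t) ≤ t := by
  have := Real.log_le_sub_one_of_pos (show (0:ℝ) < 1 + t by linarith)
  linarith

lemma my_log_ge (t : ℝ) (ht : 0 ≤ t) : t - t ^ 2 ≤ Real.log (1 + t) := by
  have h1 : (0:ℝ) < 1 + t := by linarith
  have h2 := Real.log_le_sub_one_of_pos (inv_pos.mpr h1)
  rw [Real.log_inv] at h2
  have h3 : (1 + t) * (1 + t)⁻¹ = 1 := mul_inv_cancel₀ h1.ne'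
  nlinarith [sq_nonneg t, inv_nonneg.mpr h1.le]

lemma mem_of_hasDerivAt (f : ℝ → ℝ) (x d : ℝ) (hf : HasDerivAt f d x) :
    d ∈ frechetSubdiff f x := by
  intro ε hε
  have h0 := (hasDerivAt_iff_isLittleO.mp hf).def hε
  have htend : Filter.Tendsto (fun h : ℝ => x + h) (nhds 0) (nhds x) := by
    simpa using (continuous_add_left x).tendsto 0
  have h1 := htend.eventually h0
  refine (h1.filter_mono nhdsWithin_le_nhds).mono (fun h hh => ?_)
  simp only [smul_eq_mul, add_sub_cancel_left, Real.norm_eq_abs] at hh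
  have : |f (x + h) - f x - h * d| ≤ ε * |h| := hh
  have := abs_le.mp this
  nlinarith [this.1]

lemma eq_of_mem_subdiff (f : ℝ → ℝ) (x d v : ℝ) (hf : HasDerivAt f d x)
    (hv : v ∈ frechetSubdiff f x) : v = d := by
  have htend : Filter.Tendsto (fun h : ℝ => x + h) (nhds 0) (nhds x) := by
    simpa using (continuous_add_left x).tendsto 0
  have key : ∀ ε > (0:ℝ), ∀ s : Set ℝ, s ⊆ {(0:ℝ)}ᶜ → (nhdsWithin (0:ℝ) s).NeBot →
      ∃ h : ℝ, h ∈ s ∧ (f (x + h) - f x - v * h ≥ -ε * |h|) ∧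
        |f (x + h) - f x - h * d| ≤ ε * |h| := by
    intro ε hε s hs _
    have h0 := (hasDerivAt_iff_isLittleO.mp hf).def hε
    have h1 : ∀ᶠ h in nhdsWithin (0:ℝ) s, |f (x + h) - f x - h * d| ≤ ε * |h| := by
      refine ((htend.eventually h0).filter_mono nhdsWithin_le_nhds).mono (fun h hh => ?_)
      simpa [Real.norm_eq_abs] using hh
    have h2 : ∀ᶠ h in nhdsWithin (0:ℝ) s, f (x + h) - f x - v * h ≥ -ε * |h| :=
      (hv ε hε).filter_mono (nhdsWithin_mono 0 hs)
    exact ((eventually_mem_nhdsWithin.and (h2.and h1)).exists).imp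
      (fun h ⟨a, b, c⟩ => ⟨a, b, c⟩)
  have hle : v ≤ d := by
    refine le_of_forall_pos_le_add (fun ε hε => ?_)
    have hε2 : (0:ℝ) < ε / 2 := by linarith
    obtain ⟨h, hmem, h2, h1⟩ := key (ε/2) hε2 (Set.Ioi 0)
      (fun y hy => ne_of_gt hy) (by infer_instance)
    have hh : 0 < h := hmem
    have habs : |h| = h := abs_of_pos hh
    rw [habs] at h1 h2
    have := abs_le.mp h1
    nlinarith [this.1, this.2]
  have hge : d ≤ v := by
    refine le_of_forall_pos_le_add (fun ε hε => ?_)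
    have hε2 : (0:ℝ) < ε / 2 := by linarith
    obtain ⟨h, hmem, h2, h1⟩ := key (ε/2) hε2 (Set.Iio 0)
      (fun y hy => ne_of_lt hy) (by infer_instance)
    have hh : h < 0 := hmem
    have habs : |h| = -h := abs_of_neg hh
    rw [habs] at h1 h2
    have := abs_le.mp h1
    nlinarith [this.1, this.2]
  linarith

lemma hasDeriv_logsum_pos (lam θ w : ℝ) (hθ : 0 < θ) (hw : 0 < w) :
    HasDerivAt (fun x => logSumPen lam θ |x|) (lam / (θ + w)) w := by
  have h1 : HasDerivAt (fun x : ℝ => 1 + x / θ) (1 / θ) w := by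
    simpa using ((hasDerivAt_id w).div_const θ).const_add 1
  have hpos : (0:ℝ) < 1 + w / θ := by positivity
  have h2 := (h1.log hpos.ne').const_mul lam
  have heq : (fun x => logSumPen lam θ |x|) =ᶠ[nhds w]
      (fun x => lam * Real.log (1 + x / θ)) := by
    filter_upwards [eventually_gt_nhds hw] with x hx
    simp [logSumPen, abs_of_pos hx]
  have h3 := h2.congr_of_eventuallyEq heq
  have : lam * (1 / θ / (1 + w / θ)) = lam / (θ + w) := by
    have ha : (1:ℝ) + w / θ ≠ 0 := hpos.ne'
    have hb : θ + w ≠ 0 := by intro h; apply ha; field_simp; linarith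
    field_simp
  rw [← this]
  exact h3

lemma hasDeriv_logsum_neg (lam θ w : ℝ) (hθ : 0 < θ) (hw : w < 0) :
    HasDerivAt (fun x => logSumPen lam θ |x|) (-(lam / (θ - w))) w := by
  have h1 : HasDerivAt (fun x : ℝ => 1 - x / θ) (-(1 / θ)) w := by
    simpa using (((hasDerivAt_id w).div_const θ).const_sub 1)
  have hpos : (0:ℝ) < 1 - w / θ := by
    have : w / θ < 0 := div_neg_of_neg_of_pos hw hθ
    linarith
  have h2 := (h1.log hpos.ne').const_mul lam
  have heq : (fun x => logSumPen lam θ |x|) =ᶠ[nhds w]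
      (fun x => lam * Real.log (1 - x / θ)) := by
    filter_upwards [eventually_lt_nhds hw] with x hx
    simp [logSumPen, abs_of_neg hx, sub_eq_add_neg, neg_div]
  have h3 := h2.congr_of_eventuallyEq heq
  have hθw : (0:ℝ) < θ - w := by linarith
  have : lam * (-(1 / θ) / (1 - w / θ)) = -(lam / (θ - w)) := by
    have ha : (1:ℝ) - w / θ ≠ 0 := hpos.ne'
    field_simp
  rw [← this]
  exact h3

/-- the Fréchet subdifferential of the log-sum penalty `w ↦ r_λ(|w|)`
is `[-λ/θ, λ/θ]` at `0` and `{λ·sign(w)/(θ+|w|)}` at any `w ≠ 0`. -/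
theorem logsum_subdiff (lam θ : ℝ) (hlam : 0 < lam) (hθ : 0 < θ) :
    frechetSubdiff (fun w => logSumPen lam θ |w|) 0 = Set.Icc (-(lam / θ)) (lam / θ) ∧
    ∀ w : ℝ, w ≠ 0 →
      frechetSubdiff (fun w => logSumPen lam θ |w|) w
        = {lam * Real.sign w / (θ + |w|)} := by
  constructor
  · ext v
    simp only [Set.mem_Icc]
    constructor
    · intro hv
      have key : ∀ ε > (0:ℝ), ∀ s : Set ℝ, s ⊆ {(0:ℝ)}ᶜ → (nhdsWithin (0:ℝ) s).NeBot →
          ∃ h : ℝ, h ∈ s ∧ logSumPen lam θ |0 + h| - logSumPen lam θ |(0:ℝ)| - v * h ≥ -ε * |h| := by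
        intro ε hε s hs _
        exact ((eventually_mem_nhdsWithin.and
          ((hv ε hε).filter_mono (nhdsWithin_mono 0 hs))).exists).imp (fun h ⟨a, b⟩ => ⟨a, b⟩)
      constructor
      · -- v ≥ -(lam/θ): use negative h
        rw [neg_le]
        refine le_of_forall_pos_le_add (fun ε hε => ?_)
        obtain ⟨h, hmem, hineq⟩ := key ε hε (Set.Iio 0) (fun y hy => ne_of_lt hy)
          (by infer_instance)
        have hh : h < 0 := hmem
        simp only [zero_add, abs_zero, abs_of_neg hh] at hineq
        have hlog : Real.log (1 + -h / θ) ≤ -h / θ :=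
          my_log_le _ (div_nonneg (by linarith) hθ.le)
        simp only [logSumPen, zero_div, add_zero, Real.log_one, mul_zero, sub_zero] at hineq
        have hmul : lam * Real.log (1 + -h / θ) ≤ lam * (-h / θ) :=
          mul_le_mul_of_nonneg_left hlog hlam.le
        have hd : lam * (-h / θ) = -(lam / θ * h) := by ring
        nlinarith
      · refine le_of_forall_pos_le_add (fun ε hε => ?_)
        obtain ⟨h, hmem, hineq⟩ := key ε hε (Set.Ioi 0) (fun y hy => ne_of_gt hy)
          (by infer_instance)
        have hh : 0 < h := hmem
        simp only [zero_add, abs_zero, abs_of_pos hh] at hineq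
        have hlog : Real.log (1 + h / θ) ≤ h / θ :=
          my_log_le _ (div_nonneg hh.le hθ.le)
        simp only [logSumPen, zero_div, add_zero, Real.log_one, mul_zero, sub_zero] at hineq
        have : lam * Real.log (1 + h / θ) ≤ lam * (h / θ) :=
          mul_le_mul_of_nonneg_left hlog hlam.le
        have hd : lam * (h / θ) = lam / θ * h := by ring
        nlinarith [div_pos hlam hθ]
    · rintro ⟨hv1, hv2⟩ ε hε
      have hδ : (0:ℝ) < ε * θ ^ 2 / lam := by positivity
      have hev : ∀ᶠ h in nhds (0:ℝ), |h - 0| < ε * θ ^ 2 / lam :=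
        eventually_abs_sub_lt 0 hδ
      refine (hev.filter_mono nhdsWithin_le_nhds).mono (fun h hh => ?_)
      rw [sub_zero] at hh
      simp only [zero_add, abs_zero, logSumPen, zero_div, add_zero, Real.log_one,
        mul_zero, sub_zero]
      have ht : (0:ℝ) ≤ |h| / θ := by positivity
      have hlog := my_log_ge (|h| / θ) ht
      have h1 : lam * (|h| / θ - (|h| / θ) ^ 2) ≤ lam * Real.log (1 + |h| / θ) :=
        mul_le_mul_of_nonneg_left hlog hlam.le
      have h2 : v * h ≤ lam / θ * |h| := by
        calc v * h ≤ |v * h| := le_abs_self _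
        _ = |v| * |h| := abs_mul v h
        _ ≤ lam / θ * |h| := mul_le_mul_of_nonneg_right (abs_le.mpr ⟨hv1, hv2⟩) (abs_nonneg h)
      have hsq : |h| ^ 2 = h ^ 2 := sq_abs h
      have habs : |h| < ε * θ ^ 2 / lam := hh
      have hθ2 : (0:ℝ) < θ ^ 2 := by positivity
      rw [lt_div_iff₀ hlam] at habs
      -- |h| * lam < ε θ², so lam h² / θ² ≤ ε |h|
      have hkey : lam * (|h| / θ) ^ 2 ≤ ε * |h| := by
        rw [div_pow, mul_div_assoc', div_le_iff₀ hθ2]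
        nlinarith [abs_nonneg h]
      have h3' : lam * (|h| / θ - (|h| / θ) ^ 2) = lam / θ * |h| - lam * (|h| / θ) ^ 2 := by
        ring
      linarith [h1, h2, hkey]
  · intro w hw
    rcases lt_or_gt_of_ne hw with hneg | hpos
    · have hd := hasDeriv_logsum_neg lam θ w hθ hneg
      have hval : lam * Real.sign w / (θ + |w|) = -(lam / (θ - w)) := by
        rw [Real.sign_of_neg hneg, abs_of_neg hneg]
        ring
      ext v
      simp only [Set.mem_singleton_iff, hval]
      exact ⟨fun h => eq_of_mem_subdiff _ w _ v hd h,
             fun h => h ▸ mem_of_hasDerivAt _ w _ hd⟩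
    · have hd := hasDeriv_logsum_pos lam θ w hθ hpos
      have hval : lam * Real.sign w / (θ + |w|) = lam / (θ + w) := by
        rw [Real.sign_of_pos hpos, abs_of_pos hpos]
        ring
      ext v
      simp only [Set.mem_singleton_iff, hval]
      exact ⟨fun h => eq_of_mem_subdiff _ w _ v hd h,
             fun h => h ▸ mem_of_hasDerivAt _ w _ hd⟩
end

section
/- Suppose a sequence (α_k) ⊂ (0,1] satisfies, for nonnegative error tolerances (ξ_k) with Σ_k ξ_k < ∞ and for constants γ̲, τ̲, L > 0 and a lower-bounded function f with iterates w_k, the inequality f(w_{k+1}) ≤ f(w_k) − (γ̲/L²)·(max(((1−α_k)/α_k)·τ̲ − ξ_{k+1}, 0))². Then ((1−α_k)/α_k)·τ̲ − ξ_{k+1} → 0, and hence α_k → 1. -/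
open Filter

/-- convergence of the inexact FireWorks algorithm: the
sufficient-decrease inequality with summable tolerances forces
`((1-α_k)/α_k)·τ̲ - ξ_{k+1} → 0` and hence `α_k → 1`. -/
theorem inexact_fireworks_convergence {d : ℕ}
    (f : EuclideanSpace ℝ (Fin d) → ℝ) (hbdd : BddBelow (Set.range f))
    (w : ℕ → EuclideanSpace ℝ (Fin d)) (α ξ : ℕ → ℝ)
    (γlb τlb L : ℝ) (hγlb : 0 < γlb) (hτlb : 0 < τlb) (hL : 0 < L)
    (hα : ∀ k, α k ∈ Set.Ioc (0:ℝ) 1)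
    (hξ : ∀ k, 0 ≤ ξ k) (hξsum : Summable ξ)
    (hdec : ∀ k, f (w (k + 1)) ≤ f (w k)
      - (γlb / L ^ 2) * (max (((1 - α k) / α k) * τlb - ξ (k + 1)) 0) ^ 2) :
    Tendsto (fun k => ((1 - α k) / α k) * τlb - ξ (k + 1)) atTop (nhds 0) ∧
    Tendsto α atTop (nhds 1) := by
  obtain ⟨B, hB⟩ := hbdd
  have hBle : ∀ x, B ≤ f x := fun x => hB (Set.mem_range_self x)
  set c : ℝ := γlb / L ^ 2 with hc
  have hcpos : 0 < c := div_pos hγlb (pow_pos hL 2)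
  set g : ℕ → ℝ := fun k => max (((1 - α k) / α k) * τlb - ξ (k + 1)) 0 with hg
  have hgnn : ∀ k, 0 ≤ g k := fun k => le_max_right _ _
  -- partial sums bounded
  have hsum : ∀ n, ∑ k ∈ Finset.range n, c * g k ^ 2 ≤ f (w 0) - f (w n) := by
    intro n
    induction n with
    | zero => simp
    | succ n ih =>
      rw [Finset.sum_range_succ]
      have := hdec n
      linarith
  have hsummable : Summable (fun k => c * g k ^ 2) := by
    apply summable_of_sum_range_le (c := f (w 0) - B)
    · intro k; positivity
    · intro n; have := hsum n; have := hBle (w n); linarith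
  have hcg2 : Tendsto (fun k => c * g k ^ 2) atTop (nhds 0) :=
    hsummable.tendsto_atTop_zero
  have hg2 : Tendsto (fun k => g k ^ 2) atTop (nhds 0) := by
    have := hcg2.const_mul c⁻¹
    simpa [mul_assoc, inv_mul_cancel_left₀ hcpos.ne'] using this
  have hgt : Tendsto g atTop (nhds 0) := by
    have hsq : Tendsto (fun k => Real.sqrt (g k ^ 2)) atTop (nhds 0) := by
      have := (Real.continuous_sqrt.tendsto 0).comp hg2
      simpa [Function.comp_def] using this
    refine hsq.congr (fun k => ?_)
    rw [Real.sqrt_sq (hgnn k)]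
  have hξt : Tendsto (fun k => ξ (k + 1)) atTop (nhds 0) :=
    hξsum.tendsto_atTop_zero.comp (tendsto_add_atTop_nat 1)
  have hαpos : ∀ k, 0 < α k := fun k => (hα k).1
  have hαle : ∀ k, α k ≤ 1 := fun k => (hα k).2
  have he : Tendsto (fun k => ((1 - α k) / α k) * τlb - ξ (k + 1)) atTop (nhds 0) := by
    refine tendsto_of_tendsto_of_tendsto_of_le_of_le (by simpa using hξt.neg) hgt ?_ ?_
    · intro k
      have h1 : 0 ≤ (1 - α k) / α k := div_nonneg (by linarith [hαle k]) (hαpos k).le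
      have : 0 ≤ ((1 - α k) / α k) * τlb := mul_nonneg h1 hτlb.le
      simp only [neg_le_sub_iff_le_add]
      linarith
    · intro k; exact le_max_left _ _
  refine ⟨he, ?_⟩
  -- (1-α)/α → 0
  have hr : Tendsto (fun k => (1 - α k) / α k) atTop (nhds 0) := by
    have : Tendsto (fun k => (((1 - α k) / α k) * τlb - ξ (k + 1) + ξ (k + 1)) / τlb) atTop (nhds ((0 + 0) / τlb)) :=
      (he.add hξt).div_const τlb
    simpa [hτlb.ne', mul_div_assoc, mul_div_cancel_right₀] using this
  have hinv : Tendsto (fun k => (α k)⁻¹) atTop (nhds 1) := by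
    have : Tendsto (fun k => (1 - α k) / α k + 1) atTop (nhds (0 + 1)) :=
      hr.add tendsto_const_nhds
    refine Tendsto.congr (fun k => ?_) (by simpa using this)
    field_simp [(hαpos k).ne']
    ring
  have := hinv.inv₀ one_ne_zero
  exact Tendsto.congr (fun k => inv_inv (α k)) (by simpa using this)
end
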